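/- arXiv:1507.03873 — 4 statements merged into one kernel-verified Lean document; each statement's English description precedes it below -/
import Mathlib

section
/- Let X : ℝ → ℝ² be a twice continuously differentiable, L-periodic curve (L > 0) with ‖X'(s)‖ = 1 for all s, which is injective on the interval [0, L). Then there exists r > 0 such that the normal map Φ(s,t) = X(s) + t·R(X'(s)) is injective on [0, L) × (-r, r); equivalently, for any two distinct points of the curve, the open normal line segments of radius r centered at those points are disjoint (existence of an r-tubular neighborhood, Lemma 2.1 of the paper). -/
open RealInnerProductSpace

/-- Rotation by 90 degrees in the Euclidean plane: `R(a₁, a₂) = (-a₂, a₁)`. -/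
noncomputable def rot (a : EuclideanSpace ℝ (Fin 2)) : EuclideanSpace ℝ (Fin 2) :=
  (WithLp.equiv 2 (Fin 2 → ℝ)).symm ![-a 1, a 0]

lemma rot_apply0 (a : EuclideanSpace ℝ (Fin 2)) : rot a 0 = -a 1 := rfl
lemma rot_apply1 (a : EuclideanSpace ℝ (Fin 2)) : rot a 1 = a 0 := rfl

lemma inner_rot_self (a : EuclideanSpace ℝ (Fin 2)) : ⟪rot a, a⟫ = 0 := by
  simp [PiLp.inner_apply, Fin.sum_univ_two, rot_apply0, rot_apply1]; ring

lemma norm_rot (a : EuclideanSpace ℝ (Fin 2)) : ‖rot a‖ = ‖a‖ := by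
  simp only [EuclideanSpace.norm_eq, Fin.sum_univ_two, rot_apply0, rot_apply1, norm_neg]
  rw [add_comm]

lemma rot_sub (a b : EuclideanSpace ℝ (Fin 2)) : rot (a - b) = rot a - rot b := by
  ext i; fin_cases i <;> simp [rot] <;> ring

/-- Core quantitative local injectivity of the normal map. -/
lemma near (X : ℝ → EuclideanSpace ℝ (Fin 2)) (M : ℝ) (hM : 0 ≤ M)
    (hd : Differentiable ℝ X)
    (hunit : ∀ s, ‖deriv X s‖ = 1)
    (hlip : ∀ a b : ℝ, ‖deriv X b - deriv X a‖ ≤ M * |b - a|)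
    (s d t t' : ℝ) (hd0 : 0 ≤ d) (h1 : M * d ≤ 1/3) (h2 : M * |t'| ≤ 1/3)
    (heq : X s + t • rot (deriv X s) = X (s + d) + t' • rot (deriv X (s + d))) :
    d = 0 ∧ t = t' := by
  set v := deriv X s with hv
  set w := deriv X (s + d) with hw
  -- Taylor estimate
  have hE : ‖X (s + d) - X s - d • v‖ ≤ M * d ^ 2 := by
    set F : ℝ → EuclideanSpace ℝ (Fin 2) := fun u => X u - u • v with hF
    have hder : ∀ u ∈ Set.Icc s (s + d),
        HasDerivWithinAt F (deriv X u - v) (Set.Icc s (s + d)) u := by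
      intro u _
      have h1' : HasDerivAt X (deriv X u) u := (hd u).hasDerivAt
      have h2' : HasDerivAt (fun u : ℝ => u • v) ((1 : ℝ) • v) u :=
        (hasDerivAt_id u).smul_const v
      have := (h1'.sub h2').hasDerivWithinAt (s := Set.Icc s (s + d))
      rw [one_smul] at this
      exact this
    have hbound : ∀ u ∈ Set.Icc s (s + d), ‖deriv X u - v‖ ≤ M * d := by
      intro u hu
      have := hlip s u
      have habs : |u - s| ≤ d := by
        rw [abs_of_nonneg (by linarith [hu.1])]; linarith [hu.2]
      calc ‖deriv X u - v‖ ≤ M * |u - s| := this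
        _ ≤ M * d := by nlinarith
    have := Convex.norm_image_sub_le_of_norm_hasDerivWithin_le hder hbound
      (convex_Icc _ _) (Set.left_mem_Icc.2 (by linarith)) (Set.right_mem_Icc.2 (by linarith))
    have hFd : F (s + d) - F s = X (s + d) - X s - d • v := by
      simp only [hF, add_smul]; abel
    rw [hFd] at this
    calc ‖X (s + d) - X s - d • v‖ ≤ M * d * ‖s + d - s‖ := this
      _ = M * d ^ 2 := by
          rw [show s + d - s = d by ring, Real.norm_eq_abs, abs_of_nonneg hd0]; ring
  -- the difference is zero
  have hzero : X (s + d) - X s + t' • rot w - t • rot v = 0 := by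
    rw [show X (s + d) - X s + t' • rot w - t • rot v
        = (X (s + d) + t' • rot w) - (X s + t • rot v) by abel, ← heq]
    abel
  -- inner product with v
  have hvv : ⟪v, v⟫ = 1 := by
    rw [real_inner_self_eq_norm_sq, hunit]; norm_num
  have hip : ⟪X (s + d) - X s, v⟫ + t' * ⟪rot w, v⟫ - t * ⟪rot v, v⟫ = 0 := by
    have := congrArg (fun z => ⟪z, v⟫) hzero
    simpa [inner_add_left, inner_sub_left, inner_smul_left] using this
  rw [inner_rot_self] at hip
  -- estimate the pieces
  have hEip : |⟪X (s + d) - X s - d • v, v⟫| ≤ M * d ^ 2 := by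
    calc |⟪X (s + d) - X s - d • v, v⟫| ≤ ‖X (s + d) - X s - d • v‖ * ‖v‖ :=
          abs_real_inner_le_norm _ _
      _ = ‖X (s + d) - X s - d • v‖ := by rw [hunit]; ring
      _ ≤ M * d ^ 2 := hE
  have hmain : ⟪X (s + d) - X s, v⟫ = d + ⟪X (s + d) - X s - d • v, v⟫ := by
    have hh : ⟪X (s + d) - X s - d • v, v⟫ = ⟪X (s + d) - X s, v⟫ - d * ⟪v, v⟫ := by
      rw [inner_sub_left, real_inner_smul_left]
    rw [hh, hvv]; ring
  have hwv : |⟪rot w, v⟫| ≤ M * d := by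
    have : ⟪rot w, v⟫ = ⟪rot w - rot v, v⟫ := by
      rw [inner_sub_left, inner_rot_self]; ring
    rw [this, ← rot_sub]
    calc |⟪rot (w - v), v⟫| ≤ ‖rot (w - v)‖ * ‖v‖ := abs_real_inner_le_norm _ _
      _ = ‖w - v‖ := by rw [norm_rot, hunit]; ring
      _ ≤ M * d := by
          have := hlip s (s + d)
          rwa [show s + d - s = d by ring, abs_of_nonneg hd0] at this
  -- conclude d = 0
  have hd0' : d = 0 := by
    by_contra hne
    have hdpos : 0 < d := lt_of_le_of_ne hd0 (Ne.symm hne)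
    have hb1 : ⟪X (s + d) - X s - d • v, v⟫ ≥ -(M * d ^ 2) := (abs_le.mp hEip).1
    have hb2 : t' * ⟪rot w, v⟫ ≥ -(|t'| * (M * d)) := by
      have : |t' * ⟪rot w, v⟫| ≤ |t'| * (M * d) := by
        rw [abs_mul]
        exact mul_le_mul_of_nonneg_left hwv (abs_nonneg _)
      linarith [(abs_le.mp this).1]
    have hb3 : |t'| * (M * d) ≤ (1/3) * d := by nlinarith [abs_nonneg t']
    nlinarith
  refine ⟨hd0', ?_⟩
  have hw0 : w = v := by rw [hw, hv, hd0', add_zero]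
  rw [hd0', add_zero, hw0] at heq
  have hts : t • rot v = t' • rot v := add_left_cancel heq
  have h0 : (t - t') • rot v = 0 := by rw [sub_smul, hts, sub_self]
  have hn := congrArg norm h0
  rw [norm_smul, norm_rot, hv, hunit, mul_one, norm_zero, Real.norm_eq_abs, abs_eq_zero] at hn
  exact sub_eq_zero.mp hn

/-- Existence of an `r`-tubular neighborhood of a closed `C²` unit-speed curve
(Lemma 2.1 of the paper). -/
theorem stmt0 (X : ℝ → EuclideanSpace ℝ (Fin 2)) (L : ℝ) (hL : 0 < L)
    (hX : ContDiff ℝ 2 X) (hunit : ∀ s : ℝ, ‖deriv X s‖ = 1)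
    (hper : ∀ s : ℝ, X (s + L) = X s)
    (hinj : Set.InjOn X (Set.Ico 0 L)) :
    ∃ r : ℝ, 0 < r ∧
      Set.InjOn (fun p : ℝ × ℝ => X p.1 + p.2 • rot (deriv X p.1))
        (Set.Ico 0 L ×ˢ Set.Ioo (-r) r) := by
  have hd : Differentiable ℝ X := hX.differentiable (by norm_num)
  have hT1 : ContDiff ℝ 1 (deriv X) := by
    have : ContDiff ℝ ((1 : ℕ) + 1) X := by exact_mod_cast hX
    exact (contDiff_succ_iff_deriv.mp this).2.2
  have hdT : Differentiable ℝ (deriv X) := hT1.differentiable (by norm_num)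
  have hcT' : Continuous (deriv (deriv X)) := (contDiff_one_iff_deriv.mp hT1).2
  -- periodicity of derivatives
  have pT : ∀ s, deriv X (s + L) = deriv X s := by
    intro s
    have hfun : (fun u => X (u + L)) = X := funext hper
    rw [← deriv_comp_add_const, hfun]
  have pT' : ∀ s, deriv (deriv X) (s + L) = deriv (deriv X) s := by
    intro s
    have hfun : (fun u => deriv X (u + L)) = deriv X := funext pT
    rw [← deriv_comp_add_const, hfun]
  -- bound on second derivative
  obtain ⟨C, hC⟩ := (isCompact_Icc (a := (0:ℝ)) (b := L)).exists_bound_of_continuousOn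
    hcT'.continuousOn
  set M : ℝ := max C 1 with hMdef
  have hM1 : (1 : ℝ) ≤ M := le_max_right _ _
  have hM0 : (0 : ℝ) < M := by linarith
  have hbM : ∀ u : ℝ, ‖deriv (deriv X) u‖ ≤ M := by
    intro u
    have hper' : Function.Periodic (deriv (deriv X)) L := pT'
    obtain ⟨y, hy, hyeq⟩ := hper'.exists_mem_Ico₀ hL u
    rw [hyeq]
    exact le_trans (hC y ⟨hy.1, le_of_lt hy.2⟩) (le_max_left _ _)
  -- Lipschitz bound on the tangent
  have hlip : ∀ a b : ℝ, ‖deriv X b - deriv X a‖ ≤ M * |b - a| := by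
    intro a b
    have := Convex.norm_image_sub_le_of_norm_hasDerivWithin_le
      (f := deriv X) (f' := deriv (deriv X)) (s := Set.univ)
      (fun x _ => (hdT x).hasDerivAt.hasDerivWithinAt)
      (fun x _ => hbM x) convex_univ (Set.mem_univ a) (Set.mem_univ b)
    rwa [Real.norm_eq_abs] at this
  -- injectivity up to period on [0, L]
  have hXeq : ∀ a b : ℝ, a ∈ Set.Icc 0 L → b ∈ Set.Icc 0 L → X a = X b →
      a = b ∨ a = b + L ∨ b = a + L := by
    intro a b ha hb hab
    have hXL : X L = X 0 := by have := hper 0; rwa [zero_add] at this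
    by_cases haL : a = L <;> by_cases hbL : b = L
    · left; rw [haL, hbL]
    · right; left
      have ha' : X 0 = X b := by rw [← hXL, ← haL, hab]
      have h0 : (0 : ℝ) = b := hinj ⟨le_refl 0, hL⟩ ⟨hb.1, lt_of_le_of_ne hb.2 hbL⟩ ha'
      rw [haL, ← h0, zero_add]
    · right; right
      have hb' : X a = X 0 := by rw [hab, hbL, hXL]
      have h0 : a = (0 : ℝ) := hinj ⟨ha.1, lt_of_le_of_ne ha.2 haL⟩ ⟨le_refl 0, hL⟩ hb'
      rw [hbL, h0, zero_add]
    · left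
      exact hinj ⟨ha.1, lt_of_le_of_ne ha.2 haL⟩ ⟨hb.1, lt_of_le_of_ne hb.2 hbL⟩ hab
  -- the "far" compact set and minimum distance
  set δ : ℝ := min (1 / (3 * M)) (L / 2) with hδdef
  have hδpos : 0 < δ := lt_min (by positivity) (by linarith)
  have hδL2 : δ ≤ L / 2 := min_le_right _ _
  have hδM : M * δ ≤ 1 / 3 := by
    have h1 : δ ≤ 1 / (3 * M) := min_le_left _ _
    rw [le_div_iff₀ (by positivity)] at h1
    nlinarith
  set K : Set (ℝ × ℝ) := (Set.Icc 0 L ×ˢ Set.Icc 0 L) ∩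
    {p : ℝ × ℝ | δ ≤ |p.1 - p.2| ∧ |p.1 - p.2| ≤ L - δ} with hKdef
  have hKc : IsCompact K :=
    (isCompact_Icc.prod isCompact_Icc).inter_right
      ((isClosed_le continuous_const (continuous_fst.sub continuous_snd).abs).inter
        (isClosed_le (continuous_fst.sub continuous_snd).abs continuous_const))
  have hKne : K.Nonempty := by
    refine ⟨(δ, 0), ⟨⟨le_of_lt hδpos, by linarith⟩, ⟨le_refl 0, le_of_lt hL⟩⟩, ?_, ?_⟩
    · show δ ≤ |δ - 0|
      rw [sub_zero, abs_of_pos hδpos]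
    · show |δ - 0| ≤ L - δ
      rw [sub_zero, abs_of_pos hδpos]; linarith
  have hfc : ContinuousOn (fun p : ℝ × ℝ => ‖X p.1 - X p.2‖) K :=
    (((hd.continuous.comp continuous_fst).sub
      (hd.continuous.comp continuous_snd)).norm).continuousOn
  obtain ⟨p₀, hp₀K, hp₀min⟩ := hKc.exists_isMinOn hKne hfc
  set ε : ℝ := ‖X p₀.1 - X p₀.2‖ with hεdef
  have hεpos : 0 < ε := by
    rw [hεdef, norm_pos_iff, sub_ne_zero]
    intro habs
    rcases hXeq p₀.1 p₀.2 hp₀K.1.1 hp₀K.1.2 habs with h | h | h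
    · have := hp₀K.2.1; rw [h] at this; simp at this; linarith
    · have := hp₀K.2.2; rw [h] at this
      rw [show p₀.2 + L - p₀.2 = L by ring, abs_of_pos hL] at this; linarith
    · have := hp₀K.2.2; rw [h] at this
      rw [show p₀.1 - (p₀.1 + L) = -L by ring, abs_neg, abs_of_pos hL] at this; linarith
  have hεmin : ∀ p ∈ K, ε ≤ ‖X p.1 - X p.2‖ := fun p hp => hp₀min hp
  -- choose r
  set r : ℝ := min (1 / (3 * M)) (ε / 3) with hrdef
  have hrpos : 0 < r := lt_min (by positivity) (by linarith)
  refine ⟨r, hrpos, ?_⟩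
  have hrM : ∀ t : ℝ, |t| < r → M * |t| ≤ 1 / 3 := by
    intro t ht
    have h1 : |t| ≤ 1 / (3 * M) := le_of_lt (lt_of_lt_of_le ht (min_le_left _ _))
    rw [le_div_iff₀ (by positivity)] at h1
    nlinarith [abs_nonneg t]
  have hrε : r ≤ ε / 3 := min_le_right _ _
  -- main claim with WLOG s ≤ s'
  have key : ∀ p ∈ Set.Ico 0 L ×ˢ Set.Ioo (-r) r, ∀ q ∈ Set.Ico 0 L ×ˢ Set.Ioo (-r) r,
      p.1 ≤ q.1 →
      X p.1 + p.2 • rot (deriv X p.1) = X q.1 + q.2 • rot (deriv X q.1) → p = q := by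
    rintro ⟨s, t⟩ ⟨hs, ht⟩ ⟨s', t'⟩ ⟨hs', ht'⟩ hle heq
    simp only at hs ht hs' ht' hle heq
    have habs_t : |t| < r := abs_lt.mpr ⟨ht.1, ht.2⟩
    have habs_t' : |t'| < r := abs_lt.mpr ⟨ht'.1, ht'.2⟩
    set d : ℝ := s' - s with hddef
    have hd0 : 0 ≤ d := by linarith
    have hdL : d < L := by
      have := hs.1; have := hs'.2; simp only [hddef]; linarith
    rcases le_or_gt d δ with hcase | hcase
    · -- near case
      have heq' : X s + t • rot (deriv X s) = X (s + d) + t' • rot (deriv X (s + d)) := by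
        rw [show s + d = s' by simp [hddef]]; exact heq
      obtain ⟨hdz, htz⟩ := near X M (le_of_lt hM0) hd hunit hlip s d t t' hd0
        (by nlinarith) (hrM t' habs_t') heq'
      have : s = s' := by simp only [hddef] at hdz; linarith
      simp [this, htz]
    · rcases le_or_gt d (L - δ) with hcase2 | hcase2
      · -- far case: contradiction
        exfalso
        have hK : (s', s) ∈ K := by
          refine ⟨⟨⟨hs'.1, le_of_lt hs'.2⟩, ⟨hs.1, le_of_lt hs.2⟩⟩, ?_, ?_⟩
          · show δ ≤ |s' - s|
            rw [show |s' - s| = d from by rw [← hddef]; exact abs_of_nonneg hd0]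
            linarith
          · show |s' - s| ≤ L - δ
            rw [show |s' - s| = d from by rw [← hddef]; exact abs_of_nonneg hd0]
            linarith
        have hmin := hεmin (s', s) hK
        have hXd : X s' - X s = t • rot (deriv X s) - t' • rot (deriv X s') := by
          rw [show X s' - X s = (X s' + t' • rot (deriv X s')) - (X s + t • rot (deriv X s))
            + t • rot (deriv X s) - t' • rot (deriv X s') by abel, ← heq]
          abel
        have hnorm : ‖X s' - X s‖ ≤ |t| + |t'| := by
          rw [hXd]
          calc ‖t • rot (deriv X s) - t' • rot (deriv X s')‖
              ≤ ‖t • rot (deriv X s)‖ + ‖t' • rot (deriv X s')‖ := norm_sub_le _ _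
            _ = |t| + |t'| := by
                rw [norm_smul, norm_smul, norm_rot, norm_rot, hunit, hunit]
                simp [Real.norm_eq_abs]
        simp only at hmin
        linarith
      · -- wrap-around case: contradiction
        exfalso
        set e : ℝ := L - d with hedef
        have he0 : 0 ≤ e := by simp only [hedef]; linarith
        have heδ : e ≤ δ := by simp only [hedef]; linarith
        have hXs' : X (s' - L) = X s' := by
          have h := hper (s' - L)
          rw [show s' - L + L = s' from by ring] at h; exact h.symm
        have hTs' : deriv X (s' - L) = deriv X s' := by
          have h := pT (s' - L)
          rw [show s' - L + L = s' from by ring] at h; exact h.symm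
        have heq' : X (s' - L) + t' • rot (deriv X (s' - L))
            = X (s' - L + e) + t • rot (deriv X (s' - L + e)) := by
          rw [hXs', hTs', show s' - L + e = s by simp only [hedef, hddef]; ring]
          exact heq.symm
        obtain ⟨hez, -⟩ := near X M (le_of_lt hM0) hd hunit hlip (s' - L) e t' t he0
          (by nlinarith) (hrM t habs_t) heq'
        simp only [hedef] at hez
        linarith
  intro p hp q hq heq
  rcases le_total p.1 q.1 with h | h
  · exact key p hp q hq h heq
  · exact (key q hq p hp h heq.symm).symm
end

section
/- Let X : ℝ → ℝ² be a twice continuously differentiable curve with ‖X'(s)‖ = 1 for all s, let a < b and r > 0, and suppose that the normal map Φ(s,t) = X(s) + t·R(X'(s)) is injective on [a,b] × (−r, r), that b − a ≤ 2r, and that the chord length satisfies ‖X(b) − X(a)‖ ≤ r. Then the arc length of the curve segment is at most twice the chord length: b − a ≤ 2·‖X(b) − X(a)‖. (Lemma B.1 of the paper: a curve segment whose chord has length at most the tubular radius r has arc length at most twice its chord length.) -/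
open Topology Filter

set_option linter.unusedSectionVars false
set_option linter.unusedVariables false

namespace Stmt5Aux

lemma rot0 (a : EuclideanSpace ℝ (Fin 2)) : rot a 0 = -a 1 := by simp [rot]
lemma rot1 (a : EuclideanSpace ℝ (Fin 2)) : rot a 1 = a 0 := by simp [rot]
lemma inner2 (x y : EuclideanSpace ℝ (Fin 2)) :
    (inner ℝ x y : ℝ) = x 0 * y 0 + x 1 * y 1 := by
  simp [PiLp.inner_apply, Fin.sum_univ_two, RCLike.inner_apply, mul_comm]
lemma normsq (x : EuclideanSpace ℝ (Fin 2)) : x 0 ^ 2 + x 1 ^ 2 = ‖x‖ ^ 2 := by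
  rw [← real_inner_self_eq_norm_sq, inner2]; ring
lemma rot_rot (a : EuclideanSpace ℝ (Fin 2)) : rot (rot a) = -a := by
  ext i; fin_cases i <;> simp [rot0, rot1]
lemma rot_smul (c : ℝ) (a : EuclideanSpace ℝ (Fin 2)) : rot (c • a) = c • rot a := by
  ext i; fin_cases i <;> simp [rot0, rot1, mul_comm]
lemma inner_rot_rot (x y : EuclideanSpace ℝ (Fin 2)) :
    (inner ℝ (rot x) (rot y) : ℝ) = inner ℝ x y := by
  rw [inner2, inner2, rot0, rot0, rot1, rot1]; ring
lemma inner_rot_self (x : EuclideanSpace ℝ (Fin 2)) : (inner ℝ (rot x) x : ℝ) = 0 := by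
  rw [inner2, rot0, rot1]; ring
lemma inner_self_rot (x : EuclideanSpace ℝ (Fin 2)) : (inner ℝ x (rot x) : ℝ) = 0 := by
  rw [inner2, rot0, rot1]; ring
lemma inner_rot_antisymm (x y : EuclideanSpace ℝ (Fin 2)) :
    (inner ℝ (rot x) y : ℝ) = -(inner ℝ (rot y) x : ℝ) := by
  rw [inner2, inner2, rot0, rot0, rot1, rot1]; ring
lemma indep2 (u w v : EuclideanSpace ℝ (Fin 2))
    (h1 : (inner ℝ (rot u) v : ℝ) = 0) (h2 : (inner ℝ (rot w) v : ℝ) = 0)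
    (h3 : (inner ℝ (rot u) w : ℝ) ≠ 0) : v = 0 := by
  rw [inner2, rot0, rot1] at h1 h2
  have hD : -u 1 * w 0 + u 0 * w 1 ≠ 0 := by rw [inner2, rot0, rot1] at h3; exact h3
  have hv0 : v 0 * (-u 1 * w 0 + u 0 * w 1) = 0 := by linear_combination w 0 * h1 - u 0 * h2
  have hv1 : v 1 * (-u 1 * w 0 + u 0 * w 1) = 0 := by linear_combination w 1 * h1 - u 1 * h2
  ext i; fin_cases i
  · simpa using (mul_eq_zero.mp hv0).resolve_right hD
  · simpa using (mul_eq_zero.mp hv1).resolve_right hD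
lemma decomp (T v : EuclideanSpace ℝ (Fin 2)) (hT : ‖T‖ = 1) :
    v = (inner ℝ v T : ℝ) • T + (inner ℝ v (rot T) : ℝ) • rot T := by
  have h : T 0 ^ 2 + T 1 ^ 2 = 1 := by rw [normsq, hT]; norm_num
  ext i
  fin_cases i <;>
    simp [inner2, rot0, rot1, PiLp.add_apply, PiLp.smul_apply, smul_eq_mul]
  · linear_combination (-(v 0)) * h
  · linear_combination (-(v 1)) * h

noncomputable def rotL : EuclideanSpace ℝ (Fin 2) →L[ℝ] EuclideanSpace ℝ (Fin 2) :=
  LinearMap.toContinuousLinearMap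
    { toFun := rot
      map_add' := by intro x y; ext i; fin_cases i <;> simp [rot0, rot1] <;> ring
      map_smul' := by intro c x; simpa using rot_smul c x }

lemma rotL_apply (a : EuclideanSpace ℝ (Fin 2)) : rotL a = rot a := rfl

noncomputable def curv (X : ℝ → EuclideanSpace ℝ (Fin 2)) (s : ℝ) : ℝ :=
  inner ℝ (deriv (deriv X) s) (rot (deriv X s))

section Curve

variable {X : ℝ → EuclideanSpace ℝ (Fin 2)} (hX : ContDiff ℝ 2 X)
  (hunit : ∀ s : ℝ, ‖deriv X s‖ = 1)

include hX

lemma hCD1 : ContDiff ℝ 1 (deriv X) := by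
  have h2 : ((2:ℕ) : WithTop ℕ∞) = 1 + 1 := by norm_num
  have hX' : ContDiff ℝ ((1:WithTop ℕ∞) + 1) X := by
    rw [← h2]; exact_mod_cast hX
  exact (contDiff_succ_iff_deriv.mp hX').2.2

lemma hd1 : ∀ s, HasDerivAt X (deriv X s) s := fun s =>
  ((hX.differentiable (by norm_num)) s).hasDerivAt

lemma hd2 : ∀ s, HasDerivAt (deriv X) (deriv (deriv X) s) s := fun s =>
  ((hCD1 hX).differentiable one_ne_zero s).hasDerivAt

lemma c1 : Continuous (deriv X) := (hCD1 hX).continuous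

lemma c2 : Continuous (deriv (deriv X)) := (hCD1 hX).continuous_deriv le_rfl

include hunit

lemma innerTT (s : ℝ) : (inner ℝ (deriv X s) (deriv X s) : ℝ) = 1 := by
  rw [real_inner_self_eq_norm_sq, hunit s]; norm_num

lemma accel_perp (s : ℝ) : (inner ℝ (deriv (deriv X) s) (deriv X s) : ℝ) = 0 := by
  have h1 : HasDerivAt (fun u => (inner ℝ (deriv X u) (deriv X u) : ℝ))
      ((inner ℝ (deriv X s) (deriv (deriv X) s) : ℝ) +
        (inner ℝ (deriv (deriv X) s) (deriv X s) : ℝ)) s :=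
    HasDerivAt.inner ℝ (hd2 hX s) (hd2 hX s)
  have h2 : HasDerivAt (fun u => (inner ℝ (deriv X u) (deriv X u) : ℝ)) 0 s := by
    have : (fun u => (inner ℝ (deriv X u) (deriv X u) : ℝ)) = fun _ => (1:ℝ) :=
      funext (innerTT hX hunit)
    rw [this]; exact hasDerivAt_const s 1
  have h3 := h1.unique h2
  have h4 := real_inner_comm (deriv X s) (deriv (deriv X) s)
  linarith

lemma accel_eq (s : ℝ) :
    deriv (deriv X) s = curv X s • rot (deriv X s) := by
  have h := decomp (deriv X s) (deriv (deriv X) s) (hunit s)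
  rw [accel_perp hX hunit s] at h
  simpa [curv] using h

lemma normal_hasDeriv (s : ℝ) :
    HasDerivAt (fun u => rot (deriv X u)) (-(curv X s) • deriv X s) s := by
  have h : HasDerivAt (rotL ∘ deriv X) (rotL (deriv (deriv X) s)) s :=
    (rotL.hasFDerivAt).comp_hasDerivAt s (hd2 hX s)
  have heq : (rotL ∘ deriv X) = fun u => rot (deriv X u) := rfl
  rw [heq] at h
  have hval : rotL (deriv (deriv X) s) = -(curv X s) • deriv X s := by
    rw [rotL_apply, accel_eq hX hunit s, rot_smul, rot_rot]
    simp [smul_neg, neg_smul]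
  rwa [hval] at h

lemma curv_cont : Continuous (curv X) := by
  have : Continuous (fun s => rot (deriv X s)) := rotL.continuous.comp (c1 hX)
  exact (c2 hX).inner this

end Curve

section CurvBound

variable {X : ℝ → EuclideanSpace ℝ (Fin 2)} (hX : ContDiff ℝ 2 X)
  (hunit : ∀ s : ℝ, ‖deriv X s‖ = 1)

include hX hunit

lemma curv_bound {a b r : ℝ} (hab : a < b) (hr : 0 < r)
    (hinj : Set.InjOn (fun p : ℝ × ℝ => X p.1 + p.2 • rot (deriv X p.1))
      (Set.Icc a b ×ˢ Set.Ioo (-r) r)) :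
    ∀ s₁ ∈ Set.Icc a b, |curv X s₁| ≤ 1 / r := by
  intro s₁ hs₁
  by_contra hk
  push_neg at hk
  set k := curv X s₁ with hkdef
  have hrpos : (0:ℝ) < 1 / r := one_div_pos.mpr hr
  have hkpos : 0 < |k| := lt_trans hrpos hk
  have hk0 : k ≠ 0 := abs_pos.mp hkpos
  have hinvk : |1 / k| < r := by
    rw [abs_div, abs_one, div_lt_iff₀ hkpos]
    rw [div_lt_iff₀ hr] at hk
    linarith [hk]
  have hinvk1 : -r < 1 / k := (abs_lt.mp hinvk).1
  have hinvk2 : 1 / k < r := (abs_lt.mp hinvk).2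
  -- the three auxiliary scalar functions
  set F : ℝ → ℝ := fun s => (inner ℝ (rot (rot (deriv X s₁))) (X s) : ℝ) with hFdef
  set G : ℝ → ℝ := fun s => (inner ℝ (rot (deriv X s₁)) (deriv X s) : ℝ) with hGdef
  set H : ℝ → ℝ := fun s => (inner ℝ (deriv X s) (X s - X s₁) : ℝ) with hHdef
  have hF : HasDerivAt F (-1) s₁ := by
    have h := HasDerivAt.inner ℝ (hasDerivAt_const s₁ (rot (rot (deriv X s₁)))) (hd1 hX s₁)
    simp only [inner_zero_left, add_zero] at h
    refine h.congr_deriv ?_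
    rw [rot_rot, inner_neg_left, innerTT hX hunit s₁]
  have hG : HasDerivAt G k s₁ := by
    have h := HasDerivAt.inner ℝ (hasDerivAt_const s₁ (rot (deriv X s₁))) (hd2 hX s₁)
    simp only [inner_zero_left, add_zero] at h
    refine h.congr_deriv ?_
    rw [accel_eq hX hunit s₁, real_inner_smul_right, inner_rot_rot,
      innerTT hX hunit s₁, hkdef]
    ring
  have hH : HasDerivAt H 1 s₁ := by
    have h := HasDerivAt.inner ℝ (hd2 hX s₁) ((hd1 hX s₁).sub_const (X s₁))
    simp only [sub_self, inner_zero_right, add_zero] at h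
    refine h.congr_deriv ?_
    rw [innerTT hX hunit s₁]
  have hG0 : G s₁ = 0 := inner_rot_self _
  have hH0 : H s₁ = 0 := by simp [hHdef]
  -- the approach filter
  set l : Filter ℝ := 𝓝[Set.Icc a b \ {s₁}] s₁ with hldef
  have hlne : l.NeBot := by
    rcases lt_or_eq_of_le hs₁.2 with h | h
    · have heq : 𝓝[Set.Ioc s₁ b] s₁ = 𝓝[>] s₁ := nhdsWithin_Ioc_eq_nhdsGT h
      have h1 : (𝓝[Set.Ioc s₁ b] s₁).NeBot := by rw [heq]; infer_instance
      refine h1.mono (nhdsWithin_mono s₁ ?_)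
      intro y hy
      exact ⟨⟨le_trans hs₁.1 hy.1.le, hy.2⟩, ne_of_gt hy.1⟩
    · have hb : a < s₁ := by rw [← h] at hab; exact hab
      have heq : 𝓝[Set.Ico a s₁] s₁ = 𝓝[<] s₁ := nhdsWithin_Ico_eq_nhdsLT hb
      have h1 : (𝓝[Set.Ico a s₁] s₁).NeBot := by rw [heq]; infer_instance
      refine h1.mono (nhdsWithin_mono s₁ ?_)
      intro y hy
      exact ⟨⟨hy.1, by rw [← h]; exact hy.2.le⟩, ne_of_lt hy.2⟩
  have hsub : l ≤ 𝓝[≠] s₁ := nhdsWithin_mono s₁ (fun y hy => hy.2)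
  have htF : Tendsto (slope F s₁) l (𝓝 (-1)) :=
    (hasDerivAt_iff_tendsto_slope.mp hF).mono_left hsub
  have htG : Tendsto (slope G s₁) l (𝓝 k) :=
    (hasDerivAt_iff_tendsto_slope.mp hG).mono_left hsub
  have htH : Tendsto (slope H s₁) l (𝓝 1) :=
    (hasDerivAt_iff_tendsto_slope.mp hH).mono_left hsub
  have hevmem : ∀ᶠ y in l, y ∈ Set.Icc a b \ {s₁} := eventually_mem_nhdsWithin
  -- limits of the two intersection parameters
  have ht1 : Tendsto (fun y => H y / G y) l (𝓝 (1 / k)) := by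
    have h := htH.div htG hk0
    refine h.congr' ?_
    filter_upwards [hevmem] with y hy
    have hy1 : y - s₁ ≠ 0 := sub_ne_zero.mpr hy.2
    simp only [Pi.div_apply]
    rw [slope_def_field, slope_def_field, hG0, hH0, sub_zero, sub_zero,
      div_div_div_cancel_right₀ hy1]
  have ht2 : Tendsto (fun y => (F s₁ - F y) / G y) l (𝓝 (1 / k)) := by
    have h := (htF.neg).div htG hk0
    have hval : -(-1 : ℝ) / k = 1 / k := by norm_num
    rw [hval] at h
    refine h.congr' ?_
    filter_upwards [hevmem] with y hy
    have hy1 : y - s₁ ≠ 0 := sub_ne_zero.mpr hy.2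
    simp only [Pi.div_apply]
    rw [slope_def_field, slope_def_field, hG0, sub_zero,
      ← neg_div, neg_sub, div_div_div_cancel_right₀ hy1]
  -- eventual bounds
  have ev1a : ∀ᶠ y in l, H y / G y < r := ht1.eventually_lt_const hinvk2
  have ev1b : ∀ᶠ y in l, -r < H y / G y := ht1.eventually_const_lt hinvk1
  have ev2a : ∀ᶠ y in l, (F s₁ - F y) / G y < r := ht2.eventually_lt_const hinvk2
  have ev2b : ∀ᶠ y in l, -r < (F s₁ - F y) / G y := ht2.eventually_const_lt hinvk1
  have evG : ∀ᶠ y in l, G y ≠ 0 := by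
    have h := htG.eventually_ne hk0
    filter_upwards [h, hevmem] with y hy hymem
    intro hGy
    apply hy
    rw [slope_def_field, hG0, sub_zero, hGy, zero_div]
  obtain ⟨y, hyall⟩ := (ev1a.and (ev1b.and (ev2a.and (ev2b.and (evG.and hevmem))))).exists
  obtain ⟨h1a, h1b, h2a, h2b, hGy, hymem⟩ := hyall
  have hyIcc : y ∈ Set.Icc a b := hymem.1
  have hyne : y ≠ s₁ := hymem.2
  set t1 : ℝ := H y / G y with ht1def
  set t2 : ℝ := (F s₁ - F y) / G y with ht2def
  -- the vector identity : the two normal lines meet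
  have key : X s₁ + t1 • rot (deriv X s₁) = X y + t2 • rot (deriv X y) := by
    rw [← sub_eq_zero]
    apply indep2 (rot (deriv X s₁)) (rot (deriv X y))
    · rw [inner_sub_right, inner_add_right, inner_add_right,
        real_inner_smul_right, real_inner_smul_right, inner_rot_self,
        inner_rot_rot]
      have e1 : (inner ℝ (rot (rot (deriv X s₁))) (X s₁) : ℝ) = F s₁ := rfl
      have e2 : (inner ℝ (rot (rot (deriv X s₁))) (X y) : ℝ) = F y := rfl
      have e3 : (inner ℝ (rot (deriv X s₁)) (deriv X y) : ℝ) = G y := rfl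
      have e4 : t2 * G y = F s₁ - F y := by
        rw [ht2def]; field_simp
      rw [e1, e2, e3]
      linear_combination -e4
    · rw [inner_sub_right, inner_add_right, inner_add_right,
        real_inner_smul_right, real_inner_smul_right, inner_rot_self]
      have e1 : (inner ℝ (rot (rot (deriv X y))) (rot (deriv X s₁)) : ℝ) = -G y := by
        rw [inner_rot_antisymm, inner_rot_rot]
      have e2 : (inner ℝ (rot (rot (deriv X y))) (X s₁) : ℝ)
          - (inner ℝ (rot (rot (deriv X y))) (X y) : ℝ) = H y := by
        rw [rot_rot, inner_neg_left, inner_neg_left, hHdef]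
        simp only [inner_sub_right]
        ring
      have e3 : t1 * G y = H y := by
        rw [ht1def]; field_simp
      rw [e1]
      linear_combination e2 - e3
    · rw [inner_rot_rot]
      exact hGy
  -- contradiction with injectivity
  have hmem1 : (s₁, t1) ∈ Set.Icc a b ×ˢ Set.Ioo (-r) r :=
    Set.mk_mem_prod hs₁ ⟨h1b, h1a⟩
  have hmem2 : (y, t2) ∈ Set.Icc a b ×ˢ Set.Ioo (-r) r :=
    Set.mk_mem_prod hyIcc ⟨h2b, h2a⟩
  have := hinj hmem1 hmem2 key
  exact hyne (congrArg Prod.fst this).symm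

end CurvBound
end Stmt5Aux

/-- Lemma B.1 of the paper: a curve segment possessing an `r`-tubular
neighborhood, with arc length at most `2r` and chord of length at most `r`,
has arc length at most twice its chord length. -/
theorem stmt5 (X : ℝ → EuclideanSpace ℝ (Fin 2))
    (hX : ContDiff ℝ 2 X) (hunit : ∀ s : ℝ, ‖deriv X s‖ = 1)
    (a b r : ℝ) (hab : a < b) (hr : 0 < r)
    (hinj : Set.InjOn (fun p : ℝ × ℝ => X p.1 + p.2 • rot (deriv X p.1))
      (Set.Icc a b ×ˢ Set.Ioo (-r) r))
    (hlen : b - a ≤ 2 * r)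
    (hchord : ‖X b - X a‖ ≤ r) :
    b - a ≤ 2 * ‖X b - X a‖ := by
  classical
  have hκb : ∀ s ∈ Set.Icc a b, |Stmt5Aux.curv X s| ≤ 1 / r :=
    Stmt5Aux.curv_bound hX hunit hab hr hinj
  set κ : ℝ → ℝ := Stmt5Aux.curv X with hκdef
  have hκc : Continuous κ := Stmt5Aux.curv_cont hX hunit
  set m : ℝ := (a + b) / 2 with hmdef
  have hmIcc : m ∈ Set.Icc a b := ⟨by rw [hmdef]; linarith, by rw [hmdef]; linarith⟩
  set θ : ℝ → ℝ := fun s => ∫ u in m..s, κ u with hθdef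
  have hθd : ∀ s, HasDerivAt θ (κ s) s := fun s =>
    intervalIntegral.integral_hasDerivAt_right (hκc.intervalIntegrable m s)
      (hκc.stronglyMeasurableAtFilter _ _) hκc.continuousAt
  set W : ℝ → ℝ := fun s => (inner ℝ (deriv X s) (deriv X m) : ℝ) with hWdef
  set Z : ℝ → ℝ := fun s => (inner ℝ (rot (deriv X s)) (deriv X m) : ℝ) with hZdef
  have hWd : ∀ s, HasDerivAt W (κ s * Z s) s := by
    intro s
    have h := HasDerivAt.inner ℝ (Stmt5Aux.hd2 hX s) (hasDerivAt_const s (deriv X m))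
    simp only [inner_zero_right, zero_add] at h
    refine h.congr_deriv ?_
    rw [Stmt5Aux.accel_eq hX hunit s, real_inner_smul_left]
  have hZd : ∀ s, HasDerivAt Z (-(κ s * W s)) s := by
    intro s
    have h := HasDerivAt.inner ℝ (Stmt5Aux.normal_hasDeriv hX hunit s)
      (hasDerivAt_const s (deriv X m))
    simp only [inner_zero_right, zero_add] at h
    refine h.congr_deriv ?_
    rw [real_inner_smul_left]
    ring
  set Q : ℝ → ℝ := fun s => (W s - Real.cos (θ s)) ^ 2 + (Z s + Real.sin (θ s)) ^ 2
    with hQdef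
  have hQd : ∀ s, HasDerivAt Q 0 s := by
    intro s
    have hcos : HasDerivAt (fun u => Real.cos (θ u)) (-Real.sin (θ s) * κ s) s :=
      (hθd s).cos
    have hsin : HasDerivAt (fun u => Real.sin (θ u)) (Real.cos (θ s) * κ s) s :=
      (hθd s).sin
    have h := (((hWd s).sub hcos).pow 2).add (((hZd s).add hsin).pow 2)
    refine h.congr_deriv ?_
    push_cast
    simp only [Pi.sub_apply, Pi.add_apply]
    ring
  have hQ0 : ∀ s, Q s = 0 := by
    intro s
    have hconst := is_const_of_deriv_eq_zero (𝕜 := ℝ)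
      (f := Q) (fun u => (hQd u).differentiableAt) (fun u => (hQd u).deriv) s m
    rw [hconst]
    have hθm : θ m = 0 := intervalIntegral.integral_same
    have hWm : W m = 1 := Stmt5Aux.innerTT hX hunit m
    have hZm : Z m = 0 := Stmt5Aux.inner_rot_self _
    simp [hQdef, hθm, hWm, hZm]
  have hWcos : ∀ s, W s = Real.cos (θ s) := by
    intro s
    have h : (W s - Real.cos (θ s)) ^ 2 + (Z s + Real.sin (θ s)) ^ 2 = 0 := hQ0 s
    nlinarith [sq_nonneg (W s - Real.cos (θ s)), sq_nonneg (Z s + Real.sin (θ s))]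
  have hθb : ∀ s ∈ Set.Icc a b, |θ s| ≤ 1 := by
    intro s hs
    have hsub : Set.uIoc m s ⊆ Set.Icc a b :=
      Set.uIoc_subset_uIcc.trans (Set.uIcc_subset_Icc hmIcc hs)
    have h : ‖∫ u in m..s, κ u‖ ≤ 1 / r * |s - m| := by
      apply intervalIntegral.norm_integral_le_of_norm_le_const
      intro x hx
      simpa using hκb x (hsub hx)
    have hsm : |s - m| ≤ r := by
      rw [abs_le]
      constructor
      · rw [hmdef]; linarith [hs.1, hs.2, hlen]
      · rw [hmdef]; linarith [hs.1, hs.2, hlen]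
    calc |θ s| ≤ 1 / r * |s - m| := h
      _ ≤ 1 / r * r := by
          have h0 : (0:ℝ) ≤ 1 / r := by positivity
          nlinarith
      _ = 1 := by field_simp
  have hWhalf : ∀ s ∈ Set.Icc a b, (1:ℝ) / 2 ≤ W s := by
    intro s hs
    rw [hWcos s, ← Real.cos_abs (θ s)]
    have hπ3 : (1:ℝ) ≤ Real.pi / 3 := by linarith [Real.pi_gt_three]
    have h1 : Real.cos 1 ≤ Real.cos |θ s| :=
      Real.cos_le_cos_of_nonneg_of_le_pi (abs_nonneg _)
        (by linarith [Real.pi_gt_three]) (hθb s hs)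
    have h2 : Real.cos (Real.pi / 3) ≤ Real.cos 1 :=
      Real.cos_le_cos_of_nonneg_of_le_pi (by norm_num)
        (by linarith [Real.pi_gt_three]) hπ3
    rw [Real.cos_pi_div_three] at h2
    linarith
  have hWc : Continuous W := (Stmt5Aux.c1 hX).inner continuous_const
  have hFTC : ∫ s in a..b, W s = (inner ℝ (X b - X a) (deriv X m) : ℝ) := by
    have h := intervalIntegral.integral_eq_sub_of_hasDerivAt
      (f := fun s => (inner ℝ (X s) (deriv X m) : ℝ)) (f' := W)
      (fun x _ => by
        have h2 := HasDerivAt.inner ℝ (Stmt5Aux.hd1 hX x)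
          (hasDerivAt_const x (deriv X m))
        simp only [inner_zero_right, zero_add] at h2
        exact h2)
      (hWc.intervalIntegrable a b)
    rw [h, ← inner_sub_left]
  have hmono : (b - a) / 2 ≤ ∫ s in a..b, W s := by
    have h := intervalIntegral.integral_mono_on (μ := MeasureTheory.volume) (f := fun _ => (1:ℝ) / 2) (g := W)
      hab.le (continuous_const.intervalIntegrable a b) (hWc.intervalIntegrable a b) hWhalf
    rw [intervalIntegral.integral_const] at h
    simpa [smul_eq_mul, div_eq_mul_inv] using h
  have hCS : (inner ℝ (X b - X a) (deriv X m) : ℝ) ≤ ‖X b - X a‖ := by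
    have h := real_inner_le_norm (X b - X a) (deriv X m)
    rw [hunit m] at h
    linarith
  rw [hFTC] at hmono
  linarith
end

section
/- Let X : ℝ → ℝ² be a twice continuously differentiable curve with ‖X'(s)‖ = 1 for all s, let a < b, and let κ > 0 satisfy ‖X''(s)‖ ≤ κ for all s ∈ [a,b] and κ·(b − a) ≤ 2. Then b − a ≤ 2·‖X(b) − X(a)‖, i.e. the arc length of the curve segment is at most twice the length of its chord. (Curvature form of the chord–arc inequality underlying Lemma B.1 of the paper.) -/
open intervalIntegral Set
open scoped RealInnerProductSpace

/-- Curvature form of the chord–arc inequality underlying Lemma B.1 of the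
paper: if a unit-speed `C²` plane curve has curvature bounded by `κ` on
`[a,b]` and `κ·(b-a) ≤ 2`, then the arc length `b - a` is at most twice the
chord length `‖X(b) - X(a)‖`. -/
theorem stmt7 (X : ℝ → EuclideanSpace ℝ (Fin 2))
    (hX : ContDiff ℝ 2 X) (hunit : ∀ s : ℝ, ‖deriv X s‖ = 1)
    (a b κ : ℝ) (hab : a < b) (hκ : 0 < κ)
    (hcurv : ∀ s ∈ Set.Icc a b, ‖deriv (deriv X) s‖ ≤ κ)
    (hsmall : κ * (b - a) ≤ 2) :
    b - a ≤ 2 * ‖X b - X a‖ := by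
  set m : ℝ := (a + b) / 2 with hm
  have hX2 : ContDiff ℝ ((1 : WithTop ℕ∞) + 1) X := by
    rwa [show (1 : WithTop ℕ∞) + 1 = 2 by norm_num]
  have hsplit := contDiff_succ_iff_deriv.mp hX2
  have hdX : Differentiable ℝ X := hsplit.1
  have h1 : ContDiff ℝ 1 (deriv X) := hsplit.2.2
  have hd2 : Differentiable ℝ (deriv X) := h1.differentiable one_ne_zero
  set v : EuclideanSpace ℝ (Fin 2) := deriv X m with hv
  have hmm : m ∈ Icc a b := by constructor <;> [skip; skip] <;> simp [hm] <;> linarith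
  -- mean value bound on deriv X
  have hMVT : ∀ s ∈ Icc a b, ‖deriv X s - v‖ ≤ κ * |s - m| := by
    intro s hs
    have := (convex_Icc a b).norm_image_sub_le_of_norm_hasDerivWithin_le
      (f := deriv X) (f' := deriv (deriv X)) (C := κ)
      (fun x hx => (hd2 x).hasDerivAt.hasDerivWithinAt) hcurv hmm hs
    calc ‖deriv X s - v‖ ≤ κ * ‖s - m‖ := this
      _ = κ * |s - m| := by rw [Real.norm_eq_abs]
  -- pointwise lower bound on inner product
  have hpt : ∀ s ∈ Icc a b, 1 - κ^2 * (s - m)^2 / 2 ≤ ⟪deriv X s, v⟫ := by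
    intro s hs
    have h1 := hMVT s hs
    have hsq : ‖deriv X s - v‖^2 ≤ κ^2 * (s - m)^2 := by
      have := sq_le_sq' (by nlinarith [norm_nonneg (deriv X s - v)]) h1
      calc ‖deriv X s - v‖^2 ≤ (κ * |s - m|)^2 := by
            apply sq_le_sq' _ h1; nlinarith [norm_nonneg (deriv X s - v)]
        _ = κ^2 * (s-m)^2 := by rw [mul_pow, sq_abs]
    have hid : ‖deriv X s - v‖^2 = ‖deriv X s‖^2 - 2 * ⟪deriv X s, v⟫ + ‖v‖^2 := by
      rw [@norm_sub_sq_real]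
    rw [hunit s, hunit m] at hid
    nlinarith [hsq, hid]
  -- FTC: inner product of chord with v
  have hFTC : ∫ s in a..b, ⟪deriv X s, v⟫ = ⟪X b - X a, v⟫ := by
    have : ∀ s ∈ Icc a b, HasDerivAt (fun t => ⟪X t, v⟫) ⟪deriv X s, v⟫ s := by
      intro s _
      simpa using ((hdX s).hasDerivAt.inner ℝ (hasDerivAt_const s v))
    rw [intervalIntegral.integral_eq_sub_of_hasDerivAt
      (fun s hs => this s (by rwa [uIcc_of_le hab.le] at hs))
      (((h1.continuous.inner continuous_const)).intervalIntegrable a b)]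
    rw [inner_sub_left]
  -- integral of lower bound
  have hint : ∫ s in a..b, (1 - κ^2 * (s - m)^2 / 2) = (b - a) - κ^2 * (b - a)^3 / 24 := by
    have hF : ∀ s ∈ uIcc a b, HasDerivAt (fun t => t - κ^2 * (t - m)^3 / 6)
        (1 - κ^2 * (s - m)^2 / 2) s := by
      intro s _
      have h1 : HasDerivAt (fun t : ℝ => t - m) 1 s := by
        simpa using (hasDerivAt_id s).sub_const m
      have h2 : HasDerivAt (fun t : ℝ => (t - m)^3) (3 * (s - m)^2) s := by
        simpa using h1.fun_pow 3
      have := ((hasDerivAt_id' s).fun_sub ((h2.const_mul (κ^2)).div_const 6))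
      exact this.congr_deriv (by ring)
    rw [intervalIntegral.integral_eq_sub_of_hasDerivAt hF
      ((continuous_const.sub ((continuous_const.mul
        ((continuous_id.sub continuous_const).pow 2)).div_const 2)).intervalIntegrable a b)]
    simp only [hm]; ring
  have hmono : ∫ s in a..b, (1 - κ^2 * (s - m)^2 / 2) ≤ ∫ s in a..b, ⟪deriv X s, v⟫ := by
    apply intervalIntegral.integral_mono_on hab.le
    · exact (continuous_const.sub ((continuous_const.mul
        ((continuous_id.sub continuous_const).pow 2)).div_const 2)).intervalIntegrable a b
    · exact ((h1.continuous.inner continuous_const)).intervalIntegrable a b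
    · exact hpt
  rw [hint, hFTC] at hmono
  have hcs : ⟪X b - X a, v⟫ ≤ ‖X b - X a‖ := by
    calc ⟪X b - X a, v⟫ ≤ ‖X b - X a‖ * ‖v‖ := real_inner_le_norm _ _
      _ = ‖X b - X a‖ := by rw [hv, hunit m, mul_one]
  have h0 : 0 < κ * (b - a) := mul_pos hκ (sub_pos.mpr hab)
  have hκsq : κ^2 * (b - a)^2 ≤ 4 := by nlinarith [h0, hsmall]
  nlinarith [hmono, hcs, hab]
end

section
/- Let a > 0 and b > 0, and let f : ℝ → ℝ be continuously differentiable on the interval [0, a+b]. Then (1/a)·∫₀^a f(x)² dx ≤ (2/b)·∫_a^{a+b} f(x)² dx + 2(a+b)·∫₀^{a+b} f'(x)² dx. (One-dimensional transfer inequality: the mean-square of f on a possibly small subinterval is controlled by its mean-square on an adjacent subinterval plus a derivative term; this is the fundamental-theorem-of-calculus estimate underlying the trace inequality of Lemma 5.1 of the paper, which passes from a small cut edge e⁻ to a full interior edge e₁ of the patch.) -/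
open MeasureTheory intervalIntegral Set

/-- Cauchy–Schwarz for interval integrals of continuous functions. -/
lemma csq_aux {c d : ℝ} (hcd : c ≤ d) {g : ℝ → ℝ} (hg : ContinuousOn g (Set.Icc c d)) :
    (∫ t in c..d, g t) ^ 2 ≤ (d - c) * ∫ t in c..d, g t ^ 2 := by
  rcases eq_or_lt_of_le hcd with rfl | h
  · simp
  have hd : (0:ℝ) < d - c := sub_pos.mpr h
  have hgi : IntervalIntegrable g volume c d := hg.intervalIntegrable_of_Icc hcd
  have hg2 : IntervalIntegrable (fun t => g t ^ 2) volume c d :=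
    (hg.pow 2).intervalIntegrable_of_Icc hcd
  set I := ∫ t in c..d, g t with hI
  set S := ∫ t in c..d, g t ^ 2 with hS
  set L := I / (d - c) with hLdef
  have hL : L * (d - c) = I := by rw [hLdef, div_mul_cancel₀ _ hd.ne']
  have h0 : 0 ≤ ∫ t in c..d, (g t - L) ^ 2 :=
    intervalIntegral.integral_nonneg hcd (fun t _ => sq_nonneg _)
  have hexp : ∫ t in c..d, (g t - L) ^ 2 = S - 2 * L * I + L ^ 2 * (d - c) := by
    have heq : ∀ t : ℝ, (g t - L) ^ 2 = g t ^ 2 - 2 * L * g t + L ^ 2 := fun t => by ring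
    simp_rw [heq]
    rw [intervalIntegral.integral_add ((hg2.sub ((hgi.const_mul (2 * L))))) intervalIntegrable_const,
      intervalIntegral.integral_sub hg2 (hgi.const_mul (2 * L)),
      intervalIntegral.integral_const_mul, intervalIntegral.integral_const]
    rw [← hI, ← hS]
    ring_nf
  rw [hexp] at h0
  nlinarith [mul_nonneg hd.le h0, sq_nonneg (L * (d - c) - I)]

/-- One-dimensional transfer inequality underlying the trace inequality of
Lemma 5.1 of the paper: for `f` continuously differentiable on `[0, a+b]`,
the mean-square of `f` on `[0,a]` is controlled by its mean-square on the
adjacent interval `[a, a+b]` plus a derivative term. -/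
theorem stmt12 (a b : ℝ) (ha : 0 < a) (hb : 0 < b) (f f' : ℝ → ℝ)
    (hderiv : ∀ x ∈ Set.Icc (0 : ℝ) (a + b),
      HasDerivWithinAt f (f' x) (Set.Icc (0 : ℝ) (a + b)) x)
    (hcont : ContinuousOn f' (Set.Icc (0 : ℝ) (a + b))) :
    (1 / a) * ∫ x in (0 : ℝ)..a, (f x) ^ 2 ≤
      (2 / b) * (∫ x in a..(a + b), (f x) ^ 2) +
        2 * (a + b) * ∫ x in (0 : ℝ)..(a + b), (f' x) ^ 2 := by
  have hab : (0:ℝ) ≤ a + b := by linarith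
  have hfc : ContinuousOn f (Set.Icc (0:ℝ) (a+b)) :=
    fun x hx => (hderiv x hx).continuousWithinAt
  set K := ∫ x in (0:ℝ)..(a+b), (f' x) ^ 2 with hK
  have hKnn : 0 ≤ K :=
    intervalIntegral.integral_nonneg hab (fun t _ => sq_nonneg _)
  have hf'i : IntervalIntegrable f' volume 0 (a+b) := hcont.intervalIntegrable_of_Icc hab
  have hf'2i : IntervalIntegrable (fun t => f' t ^ 2) volume 0 (a+b) :=
    (hcont.pow 2).intervalIntegrable_of_Icc hab
  -- pointwise bound
  have step1 : ∀ x ∈ Set.Icc (0:ℝ) a, ∀ y ∈ Set.Icc a (a+b),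
      f x ^ 2 ≤ 2 * f y ^ 2 + 2 * (a + b) * K := by
    intro x hx y hy
    have hxy : x ≤ y := le_trans hx.2 hy.1
    have hsub : Set.Icc x y ⊆ Set.Icc (0:ℝ) (a+b) :=
      Set.Icc_subset_Icc (by linarith [hx.1]) (by linarith [hy.2])
    have hftc : ∫ t in x..y, f' t = f y - f x := by
      apply intervalIntegral.integral_eq_sub_of_hasDeriv_right_of_le hxy
        (hfc.mono hsub) ?_ (hf'i.mono_set (by rw [Set.uIcc_of_le hxy, Set.uIcc_of_le hab]; exact hsub))
      intro t ht
      have htmem : t ∈ Set.Icc (0:ℝ) (a+b) := hsub (Set.mem_Icc.mpr ⟨ht.1.le, ht.2.le⟩)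
      have h1 : t ∈ Set.Ioo (0:ℝ) (a+b) := ⟨lt_of_le_of_lt hx.1 ht.1, lt_of_lt_of_le ht.2 (hy.2)⟩
      exact (((hderiv t htmem).hasDerivAt
        (Icc_mem_nhds h1.1 h1.2)).hasDerivWithinAt)
    have hcs : (∫ t in x..y, f' t) ^ 2 ≤ (y - x) * ∫ t in x..y, f' t ^ 2 :=
      csq_aux hxy (hcont.mono hsub)
    have hmono : ∫ t in x..y, f' t ^ 2 ≤ K := by
      apply intervalIntegral.integral_mono_interval hx.1 hxy (by linarith [hy.2]) ?_ hf'2i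
      filter_upwards with t using sq_nonneg _
    have hyx : y - x ≤ a + b := by
      have := hx.1; have := hy.2; linarith
    have hInt2nn : 0 ≤ ∫ t in x..y, f' t ^ 2 :=
      intervalIntegral.integral_nonneg hxy (fun t _ => sq_nonneg _)
    have hfy : f x = f y - ∫ t in x..y, f' t := by rw [hftc]; ring
    have hIbound : (∫ t in x..y, f' t) ^ 2 ≤ (a + b) * K := by
      calc (∫ t in x..y, f' t) ^ 2 ≤ (y - x) * ∫ t in x..y, f' t ^ 2 := hcs
        _ ≤ (a + b) * K := by
          apply mul_le_mul hyx hmono hInt2nn hab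
    rw [hfy]
    nlinarith [sq_nonneg (f y + ∫ t in x..y, f' t)]
  -- averaged bound in y: pointwise bound on [0,a]
  set C := (2 / b) * (∫ x in a..(a + b), (f x) ^ 2) + 2 * (a + b) * K with hC
  have hf2i : IntervalIntegrable (fun t => f t ^ 2) volume a (a+b) :=
    ((hfc.pow 2).mono (Set.Icc_subset_Icc (by linarith) le_rfl)).intervalIntegrable_of_Icc
      (by linarith)
  have step2 : ∀ x ∈ Set.Icc (0:ℝ) a, f x ^ 2 ≤ C := by
    intro x hx
    have h0 : 0 ≤ ∫ y in a..(a+b), (2 * f y ^ 2 + 2 * (a + b) * K - f x ^ 2) := by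
      apply intervalIntegral.integral_nonneg (by linarith)
      intro y hy
      have := step1 x hx y hy
      linarith
    have hexp : ∫ y in a..(a+b), (2 * f y ^ 2 + 2 * (a + b) * K - f x ^ 2)
        = 2 * (∫ y in a..(a+b), f y ^ 2) + (2 * (a + b) * K - f x ^ 2) * b := by
      have heq : ∀ y : ℝ, 2 * f y ^ 2 + 2 * (a + b) * K - f x ^ 2
          = 2 * f y ^ 2 + (2 * (a + b) * K - f x ^ 2) := fun y => by ring
      simp_rw [heq]
      rw [intervalIntegral.integral_add (hf2i.const_mul 2) intervalIntegrable_const,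
        intervalIntegral.integral_const_mul, intervalIntegral.integral_const]
      simp [smul_eq_mul]
      ring
    rw [hexp] at h0
    have hrw : ((2 / b) * (∫ y in a..(a+b), f y ^ 2) + 2 * (a + b) * K) * b
        = 2 * (∫ y in a..(a+b), f y ^ 2) + 2 * (a + b) * K * b := by
      field_simp
    rw [hC, ← mul_le_mul_iff_of_pos_right hb, hrw]
    nlinarith
  -- integrate over x
  have step3 : ∫ x in (0:ℝ)..a, f x ^ 2 ≤ a * C := by
    have hf2i0 : IntervalIntegrable (fun t => f t ^ 2) volume 0 a :=
      ((hfc.pow 2).mono (Set.Icc_subset_Icc le_rfl (by linarith))).intervalIntegrable_of_Icc ha.le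
    calc ∫ x in (0:ℝ)..a, f x ^ 2 ≤ ∫ _x in (0:ℝ)..a, C := by
          apply intervalIntegral.integral_mono_on ha.le hf2i0 intervalIntegrable_const step2
      _ = a * C := by simp only [intervalIntegral.integral_const, smul_eq_mul]; rw [hC]; ring
  calc (1 / a) * ∫ x in (0:ℝ)..a, f x ^ 2 ≤ (1 / a) * (a * C) :=
        mul_le_mul_of_nonneg_left step3 (by positivity)
    _ = C := by field_simp
end
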